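/- arXiv:2012.04317 — 8 statements merged into one kernel-verified Lean document; each statement's English description precedes it below -/
import Mathlib

section
/- A morphism φ : (A,α) → (B,β) of Ω-valued sets is represented by a map h : A → B (i.e., φ(a,b) = α(a) ∧ β(ha,b) for all a,b) if and only if φ(a,b) ≤ β(ha,b) for all a ∈ A, b ∈ B. -/
variable {Ω A B C : Type*}

/-- An `Ω`-valued set structure: a symmetric, transitive `Ω`-valued equality. -/
structure IsOSet [Order.Frame Ω] (α : A → A → Ω) : Prop where
  symm : ∀ a b, α a b = α b a
  trans : ∀ a b c, α a b ⊓ α b c ≤ α a c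

/-- A morphism of `Ω`-valued sets, as a functional relation. -/
structure IsMorphism [Order.Frame Ω] (α : A → A → Ω) (β : B → B → Ω)
    (φ : A → B → Ω) : Prop where
  ext : ∀ a a' b b', α a a' ⊓ φ a b ⊓ β b b' ≤ φ a' b'
  sv : ∀ a b b', φ a b ⊓ φ a b' ≤ β b b'
  total : ∀ a, α a a = ⨆ b, φ a b


/-- A morphism φ is represented by h iff φ(a,b) ≤ β(ha,b) for all a, b. -/
theorem stmt5 [Order.Frame Ω] (α : A → A → Ω) (β : B → B → Ω)
    (hα : IsOSet α) (hβ : IsOSet β) (φ : A → B → Ω)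
    (hφ : IsMorphism α β φ) (h : A → B) :
    (∀ a b, φ a b = α a a ⊓ β (h a) b) ↔ (∀ a b, φ a b ≤ β (h a) b) := by
  constructor
  · intro H a b
    rw [H a b]; exact inf_le_right
  · intro H a b
    have hle : φ a b ≤ α a a := by
      rw [hφ.total a]; exact le_iSup _ b
    apply le_antisymm (le_inf hle (H a b))
    rw [hφ.total a, iSup_inf_eq]
    apply iSup_le
    intro b'
    have h1 : φ a b' ⊓ β (h a) b ≤ α a a ⊓ φ a b' ⊓ β b' b := by
      refine le_inf (le_inf ?_ inf_le_left) ?_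
      · exact inf_le_left.trans (by rw [hφ.total a]; exact le_iSup _ b')
      · calc φ a b' ⊓ β (h a) b ≤ β b' (h a) ⊓ β (h a) b :=
              inf_le_inf_right _ ((H a b').trans (le_of_eq (hβ.symm _ _)))
          _ ≤ β b' b := hβ.trans _ _ _
    exact h1.trans (hφ.ext a a b' b)
end

section
/- Let (A,α) be an Ω-valued set and for a ∈ A define σ_a := α(a,·). Then σ_a is a singleton of (A,α). Moreover, an Ω-valued set (A,α) satisfies 'every singleton is of the form σ_a for a unique a ∈ A' if and only if (A,α) is complete, i.e.: (1) the preorder b ⊑ a ⟺ α(a,b) = α(b,b) is antisymmetric; (2) for every a ∈ A and U ≤ α(a,a) there exists b ⊑ a with α(b,b) = U; (3) every pairwise compatible family {aᵢ} (meaning α(aᵢ,aⱼ) = α(aᵢ,aᵢ) ∧ α(aⱼ,aⱼ) for all i,j) has a supremum with respect to ⊑. -/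
variable {Ω A B C : Type*}

/-- A singleton of an Ω-valued set (A,α). -/
def IsSingleton [Order.Frame Ω] (α : A → A → Ω) (σ : A → Ω) : Prop :=
  (∀ a a', σ a ⊓ α a a' ≤ σ a') ∧ (∀ a a', σ a ⊓ σ a' ≤ α a a')

/-- A strict relation on an Ω-valued set (A,α). -/
def IsStrict [Order.Frame Ω] (α : A → A → Ω) (σ : A → Ω) : Prop :=
  (∀ a a', σ a ⊓ α a a' ≤ σ a') ∧ (∀ a, σ a ≤ α a a)


/-- Each α(a,·) is a singleton, and every singleton is of the form α(a,·)
for a unique a iff (A,α) is complete (in the order-theoretic sense: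
antisymmetry of ⊑, existence of restrictions, and amalgamations of
pairwise-compatible families). Here b ⊑ a means α(a,b) = α(b,b). -/
theorem stmt9 [Order.Frame Ω] (α : A → A → Ω) (hα : IsOSet α) :
    (∀ a, IsSingleton α (α a)) ∧
    ((∀ σ : A → Ω, IsSingleton α σ → ∃! a, σ = α a) ↔
      ((∀ a b, α a b = α b b → α b a = α a a → a = b) ∧
       (∀ a, ∀ U : Ω, U ≤ α a a → ∃ b, α a b = α b b ∧ α b b = U) ∧
       (∀ S : Set A, (∀ a ∈ S, ∀ b ∈ S, α a b = α a a ⊓ α b b) →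
         ∃ s, (∀ a ∈ S, α s a = α a a) ∧
           ∀ t, (∀ a ∈ S, α t a = α a a) → α t s = α s s))) := by
  have hsymm := hα.symm
  have htrans := hα.trans
  -- α a b ≤ α b b
  have hle : ∀ a b, α a b ≤ α b b := fun a b => by
    have h := htrans b a b
    rw [hsymm b a, inf_idem] at h
    exact h
  have hle' : ∀ a b, α a b ≤ α a a := fun a b => by
    rw [hsymm a b]; exact hle b a
  have hsing : ∀ a, IsSingleton α (α a) :=
    fun a => ⟨fun b c => htrans a b c,
      fun b c => by have h := htrans b a c; rw [hsymm b a] at h; exact h⟩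
  refine ⟨hsing, ⟨?_, ?_⟩⟩
  · -- forward direction
    intro h
    refine ⟨?_, ?_, ?_⟩
    · -- antisymmetry
      intro a b hab hba
      have hfun : α a = α b := by
        funext c
        apply le_antisymm
        · calc α a c = α b a ⊓ α a c := by
                rw [hba]; exact (inf_eq_right.mpr (hle' a c)).symm
            _ ≤ α b c := htrans b a c
        · calc α b c = α a b ⊓ α b c := by
                rw [hab]; exact (inf_eq_right.mpr (hle' b c)).symm
            _ ≤ α a c := htrans a b c
      exact (h (α a) (hsing a)).unique rfl hfun
    · -- restrictions
      intro a U hU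
      have hσ : IsSingleton α (fun c => α a c ⊓ U) := by
        constructor
        · intro c c'
          refine le_inf ?_ ?_
          · calc α a c ⊓ U ⊓ α c c' ≤ α a c ⊓ α c c' :=
                  inf_le_inf_right _ inf_le_left
              _ ≤ α a c' := htrans a c c'
          · exact le_trans inf_le_left inf_le_right
        · intro c c'
          calc (α a c ⊓ U) ⊓ (α a c' ⊓ U) ≤ α a c ⊓ α a c' :=
                inf_le_inf inf_le_left inf_le_left
            _ ≤ α c c' := (hsing a).2 c c'
      obtain ⟨b, hb, -⟩ := h _ hσ
      have hba : α b a = U := by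
        have h' : α a a ⊓ U = α b a := congrFun hb a
        rw [← h', inf_eq_right.mpr hU]
      have hbb : α b b = U := by
        have h' : α a b ⊓ U = α b b := congrFun hb b
        rw [← h', hsymm a b, hba, inf_idem]
      exact ⟨b, by rw [hsymm a b, hba, hbb], hbb⟩
    · -- amalgamation
      intro S hS
      set σ : A → Ω := fun c => ⨆ b ∈ S, α b c with hσdef
      have hσ : IsSingleton α σ := by
        constructor
        · intro c c'
          simp only [hσdef, iSup_inf_eq]
          refine iSup₂_le fun b hb => ?_
          exact le_iSup₂_of_le b hb (htrans b c c')
        · intro c c'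
          have key2 : ∀ b ∈ S, ∀ b' ∈ S, ∀ c c' : A,
              α b c ⊓ α b' c' ≤ α c c' := by
            intro b hb b' hb' c c'
            have e1 : α b c ⊓ α b' c' ≤ α b b' := by
              rw [hS b hb b' hb']
              exact inf_le_inf (hle' b c) (hle' b' c')
            calc α b c ⊓ α b' c' ≤ (α c b ⊓ α b b') ⊓ α b' c' :=
                  le_inf (le_inf (le_trans inf_le_left (hsymm b c).le) e1)
                    inf_le_right
              _ ≤ α c b' ⊓ α b' c' := inf_le_inf_right _ (htrans c b b')
              _ ≤ α c c' := htrans c b' c'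
          simp only [hσdef, iSup_inf_eq, inf_iSup_eq]
          refine iSup₂_le fun b hb => iSup₂_le fun b' hb' => ?_
          first
            | exact key2 b hb b' hb' c c'
            | exact key2 b' hb' b hb c c'
      obtain ⟨s, hs, -⟩ := h σ hσ
      have hup : ∀ a ∈ S, α s a = α a a := by
        intro a ha
        have := congrFun hs a
        rw [← this, hσdef]
        apply le_antisymm
        · exact iSup₂_le fun b _ => hle b a
        · exact le_iSup₂_of_le a ha le_rfl
      refine ⟨s, hup, ?_⟩
      intro t ht
      apply le_antisymm (hle t s)
      have hss := congrFun hs s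
      rw [← hss, hσdef]
      refine iSup₂_le fun b hb => ?_
      calc α b s = α t b ⊓ α b s := by
            rw [ht b hb]
            exact (inf_eq_right.mpr (hle' b s)).symm
        _ ≤ α t s := htrans t b s
  · -- backward direction
    rintro ⟨h1, h2, h3⟩ σ hσ
    set S : Set A := {b | σ b = α b b} with hSdef
    have hσle : ∀ c, σ c ≤ α c c := fun c => by
      have := hσ.2 c c; rwa [inf_idem] at this
    have hcomp : ∀ a ∈ S, ∀ b ∈ S, α a b = α a a ⊓ α b b := by
      intro a ha b hb
      apply le_antisymm (le_inf (hle' a b) (hle a b))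
      have ha' : σ a = α a a := ha
      have hb' : σ b = α b b := hb
      rw [← ha', ← hb']
      exact hσ.2 a b
    obtain ⟨s, hub, hlst⟩ := h3 S hcomp
    -- (a) σ c = ⨆ b ∈ S, α b c
    have ha : ∀ c, σ c = ⨆ b ∈ S, α b c := by
      intro c
      apply le_antisymm
      · obtain ⟨b, hcb, hbb⟩ := h2 c (σ c) (hσle c)
        have hbS : b ∈ S := by
          show σ b = α b b
          apply le_antisymm (hσle b)
          calc α b b = σ c ⊓ α c b := by rw [hcb, hbb, inf_idem]
            _ ≤ σ b := hσ.1 c b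
        calc σ c = α b c := by rw [hsymm b c, hcb, hbb]
          _ ≤ ⨆ b ∈ S, α b c := le_iSup₂_of_le b hbS le_rfl
      · refine iSup₂_le fun b hb => ?_
        calc α b c = σ b ⊓ α b c := by
              rw [show σ b = α b b from hb]
              exact (inf_eq_right.mpr (hle' b c)).symm
          _ ≤ σ c := hσ.1 b c
    -- (b) α s s = ⨆ b ∈ S, α b b
    have hU : (⨆ b ∈ S, α b b) ≤ α s s := by
      refine iSup₂_le fun b hb => ?_
      rw [← hub b hb, hsymm s b]
      exact hle b s
    have hb : α s s = ⨆ b ∈ S, α b b := by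
      obtain ⟨t, hst, htt⟩ := h2 s _ hU
      have htub : ∀ b ∈ S, α t b = α b b := by
        intro b hbS
        apply le_antisymm (hle t b)
        have h1' : α b b ≤ α t s := by
          rw [hsymm t s, hst, htt]
          exact le_iSup₂_of_le b hbS le_rfl
        have h2' : α b b ≤ α s b := (hub b hbS).ge
        calc α b b ≤ α t s ⊓ α s b := le_inf h1' h2'
          _ ≤ α t b := htrans t s b
      have := hlst t htub
      rw [← this, hsymm t s, hst, htt]
    have hσs : σ s = α s s := by
      rw [ha s, hb]
      congr 1
      funext b; congr 1; funext hbS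
      rw [hsymm b s, hub b hbS]
    have hseq : σ = α s := by
      funext c
      apply le_antisymm
      · rw [ha c]
        refine iSup₂_le fun b hbS => ?_
        calc α b c = α s b ⊓ α b c := by
              rw [hub b hbS]
              exact (inf_eq_right.mpr (hle' b c)).symm
          _ ≤ α s c := htrans s b c
      · calc α s c = σ s ⊓ α s c := by
              rw [hσs]
              exact (inf_eq_right.mpr (hle' s c)).symm
          _ ≤ σ c := hσ.1 s c
    refine ⟨s, hseq, fun y hy => ?_⟩
    apply h1 y s
    · rw [← congrFun hy s, congrFun hseq s]
    · rw [← congrFun hseq y, congrFun hy y]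
end

section
/- Let (A,α), (B,β) be Ω-valued sets with (B,β) complete. Then every morphism φ : (A,α) → (B,β) is represented by a unique map h : A → B satisfying α(a,a') ≤ β(ha,ha') and α(a,a) = β(ha,ha) for all a, a' ∈ A. -/
variable {Ω A B C : Type*}

/-- If (B,β) is complete (every singleton is uniquely representable), then
every morphism φ : (A,α) → (B,β) is represented by a unique map h with
α(a,a') ≤ β(ha,ha') and α(a) = β(ha). -/
theorem stmt10 [Order.Frame Ω] (α : A → A → Ω) (β : B → B → Ω)
    (hα : IsOSet α) (hβ : IsOSet β)
    (hcomp : ∀ σ : B → Ω, IsSingleton β σ → ∃! b, σ = β b)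
    (φ : A → B → Ω) (hφ : IsMorphism α β φ) :
    ∃! h : A → B,
      (∀ a b, φ a b = α a a ⊓ β (h a) b) ∧
      (∀ a a', α a a' ≤ β (h a) (h a')) ∧
      (∀ a, α a a = β (h a) (h a)) := by
  have hββ : ∀ x y : B, β x y ≤ β x x := fun x y =>
    le_trans (le_inf le_rfl (le_of_eq (hβ.symm x y))) (hβ.trans x y x)
  have hφα : ∀ a b, φ a b ≤ α a a := fun a b => by
    rw [hφ.total]; exact le_iSup _ b
  have hsing : ∀ a, IsSingleton β (φ a) := by
    intro a
    refine ⟨fun b b' => ?_, hφ.sv a⟩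
    have := hφ.ext a a b b'
    rwa [inf_eq_right.mpr (hφα a b)] at this
  choose h hh hu using fun a => hcomp (φ a) (hsing a)
  have hdiag : ∀ a, α a a = β (h a) (h a) := by
    intro a
    apply le_antisymm
    · rw [hφ.total]
      exact iSup_le fun b => (congrFun (hh a) b) ▸ hββ (h a) b
    · have e : φ a (h a) = β (h a) (h a) := congrFun (hh a) (h a)
      rw [← e]; exact hφα a (h a)
  have hααself : ∀ a a', α a a' ≤ α a a := fun a a' =>
    le_trans (le_inf le_rfl (le_of_eq (hα.symm a a'))) (hα.trans a a' a)
  refine ⟨h, ⟨?_, ?_, hdiag⟩, ?_⟩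
  · intro a b
    rw [congrFun (hh a) b, hdiag a]
    exact (inf_eq_right.mpr (hββ (h a) b)).symm
  · intro a a'
    have h1 : α a a' ⊓ φ a (h a) ⊓ β (h a) (h a) ≤ φ a' (h a) := hφ.ext a a' (h a) (h a)
    have e : φ a (h a) = β (h a) (h a) := congrFun (hh a) (h a)
    have e' : φ a' (h a) = β (h a') (h a) := congrFun (hh a') (h a)
    have key : α a a' ≤ α a a' ⊓ φ a (h a) ⊓ β (h a) (h a) := by
      have : α a a' ≤ β (h a) (h a) := le_trans (hααself a a') (le_of_eq (hdiag a))
      exact le_inf (le_inf le_rfl (e ▸ this)) this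
    calc α a a' ≤ φ a' (h a) := le_trans key h1
      _ = β (h a') (h a) := e'
      _ = β (h a) (h a') := hβ.symm _ _
  · rintro h' ⟨hr, _, hd⟩
    funext a
    exact hu a (h' a) (funext fun b => by
      rw [hr a b, hd a]
      exact inf_eq_right.mpr (hββ (h' a) b))
end

section
/- Let (A,α) be an Ω-valued set, let Ã be the set of singletons of (A,α), and define α̃(σ,τ) := ⋁_{a∈A} σ(a) ∧ τ(a). Then (Ã,α̃) is an Ω-valued set, and the map (σ,a) ↦ σ(a) is an isomorphism of Ω-valued sets between (A,α) and (Ã,α̃) (composed either way with its inverse (a,σ) ↦ σ(a), one gets the respective identity morphisms α and α̃). -/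
variable {Ω A B C : Type*}

lemma singleton_alpha [Order.Frame Ω] (α : A → A → Ω) (hα : IsOSet α) (a : A) :
    IsSingleton α (α a) :=
  ⟨fun b c => hα.trans a b c, fun b c => by
    rw [hα.symm a b]; exact hα.trans b a c⟩

lemma singleton_le_refl [Order.Frame Ω] {α : A → A → Ω} {σ : A → Ω}
    (hσ : IsSingleton α σ) (a : A) : σ a ≤ α a a := by
  simpa using hσ.2 a a

lemma singleton_absorb [Order.Frame Ω] {α : A → A → Ω} {σ τ : A → Ω}
    (hσ : IsSingleton α σ) (hτ : IsSingleton α τ) (a b : A) :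
    σ a ⊓ (σ b ⊓ τ b) ≤ σ a ⊓ τ a := by
  refine le_inf inf_le_left ?_
  calc σ a ⊓ (σ b ⊓ τ b) ≤ (σ b ⊓ σ a) ⊓ τ b := by
        rw [inf_comm (σ b) (σ a), inf_assoc]
    _ ≤ α b a ⊓ τ b := inf_le_inf_right _ (hσ.2 b a)
    _ = τ b ⊓ α b a := inf_comm _ _
    _ ≤ τ a := hτ.1 b a

/-- The completion (Ã, α̃) by singletons is an Ω-valued set, and
(σ,a) ↦ σ(a), (a,σ) ↦ σ(a) are mutually inverse isomorphisms: each is a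
morphism, and both composites are the respective identities α and α̃. -/
theorem stmt11 [Order.Frame Ω] (α : A → A → Ω) (hα : IsOSet α) :
    IsOSet (fun σ τ : {σ : A → Ω // IsSingleton α σ} => ⨆ a, σ.1 a ⊓ τ.1 a) ∧
    IsMorphism α (fun σ τ : {σ : A → Ω // IsSingleton α σ} => ⨆ a, σ.1 a ⊓ τ.1 a)
      (fun a σ => σ.1 a) ∧
    IsMorphism (fun σ τ : {σ : A → Ω // IsSingleton α σ} => ⨆ a, σ.1 a ⊓ τ.1 a) α
      (fun σ a => σ.1 a) ∧
    (∀ a a' : A, (⨆ σ : {σ : A → Ω // IsSingleton α σ}, σ.1 a ⊓ σ.1 a') = α a a') ∧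
    (∀ σ τ : {σ : A → Ω // IsSingleton α σ},
      (⨆ a, σ.1 a ⊓ τ.1 a) = ⨆ a, σ.1 a ⊓ τ.1 a) := by
  have key : ∀ (σ τ : {σ : A → Ω // IsSingleton α σ}) (a : A),
      σ.1 a ⊓ (⨆ b, σ.1 b ⊓ τ.1 b) ≤ τ.1 a := by
    intro σ τ a
    rw [inf_iSup_eq]
    exact iSup_le fun b => le_trans (singleton_absorb σ.2 τ.2 a b) inf_le_right
  refine ⟨⟨?_, ?_⟩, ⟨?_, ?_, ?_⟩, ⟨?_, ?_, ?_⟩, ?_, fun σ τ => rfl⟩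
  · intro σ τ
    simp only [inf_comm]
  · intro σ τ ρ
    rw [iSup_inf_eq]
    refine iSup_le fun a => ?_
    rw [inf_comm]
    calc (⨆ b, τ.1 b ⊓ ρ.1 b) ⊓ (σ.1 a ⊓ τ.1 a)
        ≤ (σ.1 a ⊓ τ.1 a) ⊓ (⨆ b, τ.1 b ⊓ ρ.1 b) := le_of_eq (inf_comm _ _)
      _ = σ.1 a ⊓ (τ.1 a ⊓ ⨆ b, τ.1 b ⊓ ρ.1 b) := inf_assoc _ _ _
      _ ≤ σ.1 a ⊓ ρ.1 a := inf_le_inf_left _ (key τ ρ a)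
      _ ≤ ⨆ b, σ.1 b ⊓ ρ.1 b := le_iSup (fun b => σ.1 b ⊓ ρ.1 b) a
  · -- ext for a ↦ σ
    intro a a' σ τ
    calc α a a' ⊓ σ.1 a ⊓ (⨆ b, σ.1 b ⊓ τ.1 b)
        = α a a' ⊓ (σ.1 a ⊓ ⨆ b, σ.1 b ⊓ τ.1 b) := inf_assoc _ _ _
      _ ≤ α a a' ⊓ τ.1 a := inf_le_inf_left _ (key σ τ a)
      _ = τ.1 a ⊓ α a a' := inf_comm _ _
      _ ≤ τ.1 a' := τ.2.1 a a'
  · intro a σ τ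
    exact le_iSup (fun b => σ.1 b ⊓ τ.1 b) a
  · intro a
    refine le_antisymm ?_ (iSup_le fun σ => singleton_le_refl σ.2 a)
    exact le_iSup (fun σ : {σ : A → Ω // IsSingleton α σ} => σ.1 a)
      ⟨α a, singleton_alpha α hα a⟩
  · -- ext for σ ↦ a
    intro σ τ a a'
    calc (⨆ b, σ.1 b ⊓ τ.1 b) ⊓ σ.1 a ⊓ α a a'
        ≤ (σ.1 a ⊓ ⨆ b, σ.1 b ⊓ τ.1 b) ⊓ α a a' := by
          rw [inf_comm (⨆ b, σ.1 b ⊓ τ.1 b) (σ.1 a)]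
      _ ≤ τ.1 a ⊓ α a a' := inf_le_inf_right _ (key σ τ a)
      _ ≤ τ.1 a' := τ.2.1 a a'
  · intro σ a a'
    exact σ.2.2 a a'
  · intro σ
    simp
  · intro a a'
    refine le_antisymm (iSup_le fun σ => σ.2.2 a a') ?_
    have h1 : α a a' ≤ α a a ⊓ α a a' := by
      refine le_inf ?_ le_rfl
      have := hα.trans a a' a
      rw [hα.symm a' a] at this
      simpa using this
    exact le_trans h1 (le_iSup (fun σ : {σ : A → Ω // IsSingleton α σ} => σ.1 a ⊓ σ.1 a')
      ⟨α a, singleton_alpha α hα a⟩)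
end

section
/- Let (A,α) be an Ω-valued set. The poset 𝒫(A,α) of strict relations on (A,α), ordered pointwise, is a frame: its top is a ↦ α(a,a), bottom is a ↦ 0, meets and arbitrary joins are computed pointwise, and the Heyting implication is (σ ⇒ τ)(a) = α(a,a) ∧ (σ(a) ⇒ τ(a)), where ⇒ on the right is the implication of Ω. In particular the infinitary distributive law σ ∧ ⋁ᵢ τᵢ = ⋁ᵢ (σ ∧ τᵢ) holds in 𝒫(A,α). -/
variable {Ω A B C : Type*}

/-- The poset of strict relations on (A,α) (ordered pointwise) is a frame:
top is a ↦ α(a,a), bottom is ⊥, meets and arbitrary joins are pointwise,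
Heyting implication is (σ ⇒ τ)(a) = α(a,a) ⊓ (σ(a) ⇨ τ(a)); in particular
the infinitary distributive law holds. -/
theorem stmt13 [Order.Frame Ω] (α : A → A → Ω) (hα : IsOSet α) :
    IsStrict α (fun a => α a a) ∧
    (∀ σ, IsStrict α σ → ∀ a, σ a ≤ α a a) ∧
    IsStrict α (fun _ => (⊥ : Ω)) ∧
    (∀ σ, IsStrict α σ → ∀ a, (⊥ : Ω) ≤ σ a) ∧
    (∀ σ τ, IsStrict α σ → IsStrict α τ → IsStrict α (fun a => σ a ⊓ τ a)) ∧
    (∀ σ τ ρ, IsStrict α σ → IsStrict α τ → IsStrict α ρ →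
      ((∀ a, ρ a ≤ σ a ⊓ τ a) ↔ (∀ a, ρ a ≤ σ a) ∧ (∀ a, ρ a ≤ τ a))) ∧
    (∀ S : Set (A → Ω), (∀ σ ∈ S, IsStrict α σ) →
      IsStrict α (fun a => ⨆ σ ∈ S, σ a)) ∧
    (∀ (S : Set (A → Ω)) (τ : A → Ω), (∀ σ ∈ S, IsStrict α σ) → IsStrict α τ →
      ((∀ σ ∈ S, ∀ a, σ a ≤ τ a) ↔ ∀ a, (⨆ σ ∈ S, σ a) ≤ τ a)) ∧
    (∀ σ τ, IsStrict α σ → IsStrict α τ →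
      IsStrict α (fun a => α a a ⊓ (σ a ⇨ τ a))) ∧
    (∀ ρ σ τ, IsStrict α ρ → IsStrict α σ → IsStrict α τ →
      ((∀ a, ρ a ⊓ σ a ≤ τ a) ↔ ∀ a, ρ a ≤ α a a ⊓ (σ a ⇨ τ a))) ∧
    (∀ (σ : A → Ω) (S : Set (A → Ω)), IsStrict α σ → (∀ τ ∈ S, IsStrict α τ) →
      ∀ a, σ a ⊓ (⨆ τ ∈ S, τ a) = ⨆ τ ∈ S, σ a ⊓ τ a) := by

  have hex : ∀ a a', α a a' ≤ α a' a' := fun a a' =>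
    calc α a a' = α a' a ⊓ α a a' := by rw [hα.symm a a', inf_idem]
    _ ≤ α a' a' := hα.trans a' a a'
  refine ⟨⟨fun a a' => ?_, fun a => le_rfl⟩, fun σ hσ => hσ.2,
    ⟨fun a a' => by simp, fun a => bot_le⟩, fun σ _ a => bot_le,
    fun σ τ hσ hτ => ⟨fun a a' => ?_, fun a => le_trans inf_le_left (hσ.2 a)⟩,
    fun σ τ ρ _ _ _ => ⟨fun h => ⟨fun a => (h a).trans inf_le_left,
      fun a => (h a).trans inf_le_right⟩, fun ⟨h1, h2⟩ a => le_inf (h1 a) (h2 a)⟩,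
    fun S hS => ⟨fun a a' => ?_, fun a => ?_⟩,
    fun S τ hS hτ => ⟨fun h a => by
      simp only [iSup_le_iff]; exact fun σ hσ => h σ hσ a,
      fun h σ hσ a => le_trans (le_iSup₂ (f := fun σ (_ : σ ∈ S) => σ a) σ hσ) (h a)⟩,
    fun σ τ hσ hτ => ⟨fun a a' => ?_, fun a => inf_le_left⟩,
    fun ρ σ τ hρ hσ hτ => ⟨fun h a => le_inf (hρ.2 a) (le_himp_iff.2 (h a)),
      fun h a => le_trans (inf_le_inf_right _ (h a)) (by
        exact le_trans (inf_le_inf_right _ inf_le_right) himp_inf_le)⟩,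
    fun σ S _ _ a => by simp only [inf_iSup_eq]⟩
  · show α a a ⊓ α a a' ≤ α a' a'
    exact inf_le_of_right_le (hex a a')
  · exact le_inf (le_trans (inf_le_inf_right _ inf_le_left) (hσ.1 a a'))
      (le_trans (inf_le_inf_right _ inf_le_right) (hτ.1 a a'))
  · rw [iSup_inf_eq]
    exact iSup_le fun σ => by
      rw [iSup_inf_eq]
      exact iSup_le fun hσ =>
        le_trans ((hS σ hσ).1 a a') (le_iSup₂ (f := fun σ (_ : σ ∈ S) => σ a') σ hσ)
  · exact iSup₂_le fun σ hσ => (hS σ hσ).2 a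
  · refine le_inf (inf_le_of_right_le (hex a a')) (le_himp_iff.2 ?_)
    have h1 : α a a ⊓ (σ a ⇨ τ a) ⊓ α a a' ⊓ σ a' ≤ σ a := by
      calc α a a ⊓ (σ a ⇨ τ a) ⊓ α a a' ⊓ σ a' ≤ σ a' ⊓ α a' a := by
            rw [hα.symm a' a]
            exact le_inf inf_le_right (le_trans inf_le_left inf_le_right)
      _ ≤ σ a := hσ.1 a' a
    have h2 : α a a ⊓ (σ a ⇨ τ a) ⊓ α a a' ⊓ σ a' ≤ τ a :=
      le_trans (le_inf (le_trans inf_le_left (le_trans inf_le_left inf_le_right)) h1)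
        himp_inf_le
    calc α a a ⊓ (σ a ⇨ τ a) ⊓ α a a' ⊓ σ a' ≤ τ a ⊓ α a a' :=
          le_inf h2 (le_trans inf_le_left inf_le_right)
    _ ≤ τ a' := hτ.1 a a'
end

section
/- Let φ : (B,β) → (A,α) be a morphism of Ω-valued sets and σ a strict relation on (A,α). Then the two expressions ⋁_{a∈A} φ(b,a) ∧ σ(a) and β(b,b) ∧ ⋀_{a∈A} (φ(b,a) ⇒ σ(a)) coincide for every b ∈ B, and this common value defines a strict relation φ*σ on (B,β). -/
variable {Ω A B C : Type*}

/-- Pullback of a strict relation along a morphism: the two defining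
expressions coincide, and the result is a strict relation on (B,β). -/
theorem stmt14 [Order.Frame Ω] (α : A → A → Ω) (β : B → B → Ω)
    (hα : IsOSet α) (hβ : IsOSet β)
    (φ : B → A → Ω) (hφ : IsMorphism β α φ)
    (σ : A → Ω) (hσ : IsStrict α σ) :
    (∀ b, (⨆ a, φ b a ⊓ σ a) = β b b ⊓ ⨅ a, (φ b a ⇨ σ a)) ∧
    IsStrict β (fun b => ⨆ a, φ b a ⊓ σ a) := by
  have hle : ∀ b, (⨆ a, φ b a ⊓ σ a) ≤ β b b := fun b =>
    iSup_le fun a => inf_le_left.trans ((le_iSup _ a).trans (hφ.total b).ge)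
  constructor
  · intro b
    apply le_antisymm
    · refine le_inf (hle b) (le_iInf fun a' => iSup_le fun a => le_himp_iff.mpr ?_)
      calc φ b a ⊓ σ a ⊓ φ b a'
          ≤ σ a ⊓ (φ b a ⊓ φ b a') := by
            refine le_inf (inf_le_left.trans inf_le_right) ?_
            exact le_inf (inf_le_left.trans inf_le_left) inf_le_right
        _ ≤ σ a ⊓ α a a' := inf_le_inf_left _ (hφ.sv b a a')
        _ ≤ σ a' := hσ.1 a a'
    · rw [hφ.total b, iSup_inf_eq]
      refine iSup_le fun a => ?_
      refine le_trans (inf_le_inf_left _ (iInf_le _ a)) ?_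
      refine (le_iSup_of_le a ?_)
      exact inf_le_inf_left _ (himp_le_himp_left le_rfl) |>.trans
        (le_inf inf_le_left ((inf_himp_le)))
  · constructor
    · intro b b'
      rw [iSup_inf_eq]
      refine iSup_le fun a => le_iSup_of_le a ?_
      have h := hφ.ext b b' a a
      calc φ b a ⊓ σ a ⊓ β b b'
          ≤ (β b b' ⊓ φ b a ⊓ α a a) ⊓ σ a := by
            refine le_inf (le_inf (le_inf inf_le_right
              (inf_le_left.trans inf_le_left)) ?_) (inf_le_left.trans inf_le_right)
            exact (inf_le_left.trans inf_le_right).trans (hσ.2 a)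
        _ ≤ φ b' a ⊓ σ a := inf_le_inf_right _ h
    · exact hle
end

section
/- Let φ : (B,β) → (A,α) be a morphism of Ω-valued sets. Define, for a strict relation τ on (B,β), (∃_φ τ)(a) := ⋁_{b∈B} φ(b,a) ∧ τ(b) and (∀_φ τ)(a) := α(a,a) ∧ ⋀_{b∈B} (φ(b,a) ⇒ τ(b)), and for a strict relation σ on (A,α), (φ*σ)(b) := ⋁_{a∈A} φ(b,a) ∧ σ(a). Then ∃_φ τ and ∀_φ τ are strict relations on (A,α), and ∃_φ is left adjoint to φ* while ∀_φ is right adjoint to φ*: ∃_φ τ ≤ σ ⟺ τ ≤ φ*σ, and φ*σ ≤ τ ⟺ σ ≤ ∀_φ τ (pointwise order). -/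
variable {Ω A B C : Type*}

/-- ∃_φ is left adjoint and ∀_φ is right adjoint to the pullback φ* of
strict relations along a morphism φ : (B,β) → (A,α). -/
theorem stmt15 [Order.Frame Ω] (α : A → A → Ω) (β : B → B → Ω)
    (hα : IsOSet α) (hβ : IsOSet β)
    (φ : B → A → Ω) (hφ : IsMorphism β α φ) :
    (∀ τ : B → Ω, IsStrict β τ → IsStrict α (fun a => ⨆ b, φ b a ⊓ τ b)) ∧
    (∀ τ : B → Ω, IsStrict β τ →
      IsStrict α (fun a => α a a ⊓ ⨅ b, (φ b a ⇨ τ b))) ∧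
    (∀ (τ : B → Ω) (σ : A → Ω), IsStrict β τ → IsStrict α σ →
      ((∀ a, (⨆ b, φ b a ⊓ τ b) ≤ σ a) ↔
        ∀ b, τ b ≤ ⨆ a, φ b a ⊓ σ a)) ∧
    (∀ (τ : B → Ω) (σ : A → Ω), IsStrict β τ → IsStrict α σ →
      ((∀ b, (⨆ a, φ b a ⊓ σ a) ≤ τ b) ↔
        ∀ a, σ a ≤ α a a ⊓ ⨅ b, (φ b a ⇨ τ b))) := by

  refine ⟨?_, ?_, ?_, ?_⟩
  · -- ∃_φ τ is strict
    intro τ hτ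
    refine ⟨fun a a' => ?_, fun a => ?_⟩
    · rw [iSup_inf_eq]
      refine iSup_le fun b => le_iSup_of_le b ?_
      have hx : φ b a ⊓ τ b ⊓ α a a' ≤ β b b ⊓ φ b a ⊓ α a a' :=
        le_inf (le_inf ((inf_le_left.trans inf_le_right).trans (hτ.2 b))
          (inf_le_left.trans inf_le_left)) inf_le_right
      exact le_inf (hx.trans (hφ.ext b b a a')) (inf_le_left.trans inf_le_right)
    · exact iSup_le fun b => (le_inf inf_le_left inf_le_left).trans (hφ.sv b a a)
  · -- ∀_φ τ is strict
    intro τ hτ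
    refine ⟨fun a a' => ?_, fun a => inf_le_left⟩
    refine le_inf ?_ (le_iInf fun b => le_himp_iff.mpr ?_)
    · refine inf_le_right.trans ?_
      exact (le_inf (le_of_eq (hα.symm a a')) le_rfl).trans (hα.trans a' a a')
    · have hbb : φ b a' ≤ β b b := (hφ.total b) ▸ le_iSup (fun x => φ b x) a'
      have h1 : φ b a' ⊓ α a' a ≤ φ b a :=
        (le_inf (le_inf (inf_le_left.trans hbb) inf_le_left) inf_le_right).trans
          (hφ.ext b b a' a)
      have h2 : α a a ⊓ (⨅ b, φ b a ⇨ τ b) ⊓ α a a' ⊓ φ b a' ≤ φ b a := by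
        refine (le_inf inf_le_right ?_).trans h1
        rw [← hα.symm a a']; exact inf_le_left.trans inf_le_right
      have h3 : α a a ⊓ (⨅ b, φ b a ⇨ τ b) ⊓ α a a' ⊓ φ b a' ≤ φ b a ⇨ τ b :=
        inf_le_left.trans (inf_le_left.trans (inf_le_right.trans (iInf_le _ b)))
      exact (le_inf h3 h2).trans himp_inf_le
  · -- ∃_φ ⊣ φ*
    intro τ σ hτ hσ
    constructor
    · intro h b
      have hb : τ b ≤ β b b ⊓ τ b := le_inf (hτ.2 b) le_rfl
      rw [hφ.total b, iSup_inf_eq] at hb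
      refine hb.trans (iSup_le fun a => le_iSup_of_le a (le_inf inf_le_left ?_))
      exact (le_iSup (fun b' => φ b' a ⊓ τ b') b).trans (h a)
    · intro h a
      refine iSup_le fun b => ?_
      calc φ b a ⊓ τ b ≤ φ b a ⊓ ⨆ a', φ b a' ⊓ σ a' := inf_le_inf_left _ (h b)
        _ = ⨆ a', φ b a ⊓ (φ b a' ⊓ σ a') := inf_iSup_eq _ _
        _ ≤ σ a := by
            refine iSup_le fun a' => ?_
            have h1 : φ b a ⊓ (φ b a' ⊓ σ a') ≤ σ a' ⊓ α a' a := by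
              refine le_inf (inf_le_right.trans inf_le_right) ?_
              rw [← hα.symm a a']
              exact (le_inf inf_le_left (inf_le_right.trans inf_le_left)).trans
                (hφ.sv b a a')
            exact h1.trans (hσ.1 a' a)
  · -- φ* ⊣ ∀_φ
    intro τ σ hτ hσ
    constructor
    · intro h a
      refine le_inf (hσ.2 a) (le_iInf fun b => le_himp_iff.mpr ?_)
      have := (le_iSup (fun a' => φ b a' ⊓ σ a') a).trans (h b)
      rw [inf_comm]; exact this
    · intro h b
      refine iSup_le fun a => ?_
      exact (inf_le_inf_left _ ((h a).trans (inf_le_right.trans (iInf_le _ b)))).trans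
        inf_himp_le
end

section
/- Define δ(U,V) := (U ⇒ V) ∧ (V ⇒ U) for U,V in a frame Ω. Then (Ω,δ) is an Ω-valued set, and for any Ω-valued set (A,α) the assignments σ ↦ χ_σ with χ_σ(a,U) := α(a,a) ∧ δ(U,σ(a)), and χ ↦ σ_χ with σ_χ(a) := ⋁_{U∈Ω} χ(a,U) ∧ U, give mutually inverse bijections between strict relations on (A,α) and morphisms of Ω-valued sets from (A,α) to (Ω,δ). -/
variable {Ω A B C : Type*}

private lemma himp_trans' {Ω : Type*} [Order.Frame Ω] (U V W : Ω) :
    (U ⇨ V) ⊓ (V ⇨ W) ≤ U ⇨ W := by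
  rw [le_himp_iff, inf_comm (U ⇨ V)]
  exact himp_inf_himp_inf_le

private lemma mp' {Ω : Type*} [Order.Frame Ω] {x y z : Ω}
    (h1 : x ≤ y ⇨ z) (h2 : x ≤ y) : x ≤ z :=
  le_trans (le_inf h1 h2) himp_inf_le

/-- (Ω,δ) with δ(U,V) = (U ⇨ V) ⊓ (V ⇨ U) is an Ω-valued set, and strict
relations on (A,α) correspond bijectively to morphisms (A,α) → (Ω,δ). -/
theorem stmt16 [Order.Frame Ω] (α : A → A → Ω) (hα : IsOSet α) :
    IsOSet (fun U V : Ω => (U ⇨ V) ⊓ (V ⇨ U)) ∧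
    (∀ σ : A → Ω, IsStrict α σ →
      IsMorphism α (fun U V : Ω => (U ⇨ V) ⊓ (V ⇨ U))
        (fun a U => α a a ⊓ ((U ⇨ σ a) ⊓ (σ a ⇨ U)))) ∧
    (∀ χ : A → Ω → Ω, IsMorphism α (fun U V : Ω => (U ⇨ V) ⊓ (V ⇨ U)) χ →
      IsStrict α (fun a => ⨆ U, χ a U ⊓ U)) ∧
    (∀ σ : A → Ω, IsStrict α σ →
      (fun a => ⨆ U, (α a a ⊓ ((U ⇨ σ a) ⊓ (σ a ⇨ U))) ⊓ U) = σ) ∧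
    (∀ χ : A → Ω → Ω, IsMorphism α (fun U V : Ω => (U ⇨ V) ⊓ (V ⇨ U)) χ →
      (fun a U => α a a ⊓ ((U ⇨ ⨆ V, χ a V ⊓ V) ⊓ ((⨆ V, χ a V ⊓ V) ⇨ U))) = χ) := by
  obtain ⟨hsymm, htr⟩ := hα
  have haa : ∀ a a' : A, α a a' ≤ α a a := fun a a' =>
    le_trans (le_inf le_rfl (hsymm a a').le) (htr a a' a)
  have haa' : ∀ a a' : A, α a a' ≤ α a' a' := fun a a' =>
    le_trans (le_inf (hsymm a a').le le_rfl) (htr a' a a')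
  refine ⟨?_, ?_, ?_, ?_, ?_⟩
  · refine ⟨fun U V => inf_comm _ _, fun U V W => le_inf ?_ ?_⟩
    · exact le_trans (inf_le_inf inf_le_left inf_le_left) (himp_trans' U V W)
    · exact le_trans (inf_le_inf inf_le_right inf_le_right)
        ((inf_comm _ _).le.trans (himp_trans' W V U))
  · rintro σ ⟨hs1, hs2⟩
    refine ⟨fun a a' U V => ?_, fun a U V => ?_, fun a => ?_⟩
    · set X := α a a' ⊓ (α a a ⊓ ((U ⇨ σ a) ⊓ (σ a ⇨ U))) ⊓ ((U ⇨ V) ⊓ (V ⇨ U)) with hX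
      have xaa' : X ≤ α a a' := inf_le_left.trans inf_le_left
      have xUs : X ≤ U ⇨ σ a := inf_le_left.trans (inf_le_right.trans (inf_le_right.trans inf_le_left))
      have xsU : X ≤ σ a ⇨ U := inf_le_left.trans (inf_le_right.trans (inf_le_right.trans inf_le_right))
      have xUV : X ≤ U ⇨ V := inf_le_right.trans inf_le_left
      have xVU : X ≤ V ⇨ U := inf_le_right.trans inf_le_right
      refine le_inf (xaa'.trans (haa' a a')) (le_inf ?_ ?_) <;> rw [le_himp_iff]
      · -- X ⊓ V ≤ σ a'
        have hU : X ⊓ V ≤ U := mp' (inf_le_left.trans xVU) inf_le_right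
        have hs : X ⊓ V ≤ σ a := mp' (inf_le_left.trans xUs) hU
        exact (le_inf hs (inf_le_left.trans xaa')).trans (hs1 a a')
      · -- X ⊓ σ a' ≤ U
        have hsa : X ⊓ σ a' ≤ σ a := by
          refine le_trans (le_inf inf_le_right ?_) (hs1 a' a)
          exact (inf_le_left.trans xaa').trans (hsymm a a').le
        exact mp' (inf_le_left.trans xUV) (mp' (inf_le_left.trans xsU) hsa)
    · refine le_inf ?_ ?_
      · exact le_trans (le_inf (inf_le_left.trans (inf_le_right.trans inf_le_left))
          (inf_le_right.trans (inf_le_right.trans inf_le_right))) (himp_trans' U (σ a) V)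
      · exact le_trans (le_inf (inf_le_right.trans (inf_le_right.trans inf_le_left))
          (inf_le_left.trans (inf_le_right.trans inf_le_right))) (himp_trans' V (σ a) U)
    · refine le_antisymm ?_ (iSup_le fun U => inf_le_left)
      refine le_trans ?_ (le_iSup _ (σ a))
      simp [himp_self]
  · rintro χ ⟨hext, hsv, htot⟩
    constructor
    · intro a a'
      rw [iSup_inf_eq]
      refine iSup_le fun U => le_trans ?_ (le_iSup _ U)
      refine le_inf ?_ (inf_le_left.trans inf_le_right)
      have h := hext a a' U U
      simp only [himp_self, inf_top_eq] at h
      exact (le_inf inf_le_right (inf_le_left.trans inf_le_left)).trans h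
    · intro a
      exact iSup_le fun U => inf_le_left.trans ((le_iSup (χ a) U).trans (htot a).ge)
  · rintro σ ⟨hs1, hs2⟩
    funext a
    refine le_antisymm (iSup_le fun U => ?_) ?_
    · exact mp' (inf_le_left.trans (inf_le_right.trans inf_le_left)) inf_le_right
    · refine le_trans ?_ (le_iSup _ (σ a))
      refine le_inf (le_inf (hs2 a) ?_) le_rfl
      simp [himp_self]
  · rintro χ ⟨hext, hsv, htot⟩
    funext a U
    set s : Ω := ⨆ V, χ a V ⊓ V with hs
    have hVs : ∀ V, χ a V ⊓ s ≤ V := by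
      intro V
      rw [hs, inf_iSup_eq]
      refine iSup_le fun W => ?_
      refine le_trans (le_inf ?_ (inf_le_right.trans inf_le_right)) himp_inf_le
      exact (le_inf inf_le_left (inf_le_right.trans inf_le_left)).trans
        ((hsv a V W).trans inf_le_right)
    refine le_antisymm ?_ (le_inf ((le_iSup (χ a) U).trans (htot a).ge) (le_inf ?_ ?_))
    · rw [htot a, iSup_inf_eq]
      refine iSup_le fun V => ?_
      set W := χ a V ⊓ ((U ⇨ s) ⊓ (s ⇨ U)) with hW
      have wχ : W ≤ χ a V := inf_le_left
      have wαa : W ≤ α a a := inf_le_left.trans ((le_iSup (χ a) V).trans (htot a).ge)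
      have wUs : W ≤ U ⇨ s := inf_le_right.trans inf_le_left
      have wsU : W ≤ s ⇨ U := inf_le_right.trans inf_le_right
      refine le_trans (le_inf (le_inf wαa wχ) (le_inf ?_ ?_)) (hext a a V U)
      · -- W ≤ V ⇨ U
        rw [le_himp_iff]
        have h1 : W ⊓ V ≤ s :=
          (inf_le_inf_right V wχ).trans ((le_iSup (fun W => χ a W ⊓ W) V).trans hs.ge)
        exact mp' (inf_le_left.trans wsU) h1
      · -- W ≤ U ⇨ V
        rw [le_himp_iff]
        have h1 : W ⊓ U ≤ s := mp' (inf_le_left.trans wUs) inf_le_right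
        exact (le_inf (inf_le_left.trans wχ) h1).trans (hVs V)
    · rw [le_himp_iff]
      exact (le_iSup (fun V => χ a V ⊓ V) U).trans hs.ge
    · rw [le_himp_iff]
      exact hVs U
end
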